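/- In the polynomial ring ℂ[x₂,x₃,x₄], let D = −432x₂³x₃² + 36x₂²x₄² + 108x₂x₃²x₄ − 27x₃⁴ − 8x₄³ (three times the determinant of the matrix 𝒯₁). Then ℒ₀ D = 12 D, ℒ₁ D = 0, and ℒ₂ D = 0; in particular the vector fields ℒ₀, ℒ₁, ℒ₂ are tangent to the hypersurface {D = 0}. -/
import Mathlib


open MvPolynomial

noncomputable section

/-- The polynomial ring ℂ[x₂,x₃,x₄]; `X 0 = x₂`, `X 1 = x₃`, `X 2 = x₄`. -/
abbrev R3 : Type := MvPolynomial (Fin 3) ℂ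

def x2 : R3 := X 0
def x3 : R3 := X 1
def x4 : R3 := X 2

/-- ℒ₀ = 2x₂∂/∂x₂ + 3x₃∂/∂x₃ + 4x₄∂/∂x₄ -/
def L0 (P : R3) : R3 :=
  2 * x2 * pderiv (0 : Fin 3) P + 3 * x3 * pderiv (1 : Fin 3) P + 4 * x4 * pderiv (2 : Fin 3) P

/-- ℒ₁ = x₃∂/∂x₂ + x₄∂/∂x₃ + 12x₂x₃∂/∂x₄ -/
def L1 (P : R3) : R3 :=
  x3 * pderiv (0 : Fin 3) P + x4 * pderiv (1 : Fin 3) P + 12 * x2 * x3 * pderiv (2 : Fin 3) P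

/-- ℒ₂ = ((2/3)x₄ − 2x₂²)∂/∂x₂ + 3x₂x₃∂/∂x₃ + (3x₃² + 2x₂x₄)∂/∂x₄ -/
def L2 (P : R3) : R3 :=
  (C (2/3 : ℂ) * x4 - 2 * x2 ^ 2) * pderiv (0 : Fin 3) P + 3 * x2 * x3 * pderiv (1 : Fin 3) P
    + (3 * x3 ^ 2 + 2 * x2 * x4) * pderiv (2 : Fin 3) P

/-- D = 3·det 𝒯₁ -/
def D : R3 :=
  -432 * x2 ^ 3 * x3 ^ 2 + 36 * x2 ^ 2 * x4 ^ 2 + 108 * x2 * x3 ^ 2 * x4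
    - 27 * x3 ^ 4 - 8 * x4 ^ 3

lemma pd_ofNat (i : Fin 3) (n : ℕ) [n.AtLeastTwo] :
    pderiv i (no_index (OfNat.ofNat n) : R3) = 0 := by
  rw [← map_ofNat (C : ℂ →+* R3) n, pderiv_C]

theorem fields_tangent_to_discriminant :
    L0 D = 12 * D ∧ L1 D = 0 ∧ L2 D = 0 := by
  have h : (C (2/3 : ℂ) : R3) * 3 = 2 := by
    rw [show ((3:R3) = C 3) from (map_ofNat C 3).symm,
        show ((2:R3) = C 2) from (map_ofNat C 2).symm, ← map_mul]
    norm_num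
  refine ⟨?_, ?_, ?_⟩
  · simp only [L0, D, x2, x3, x4, map_add, map_sub, map_neg, pd_ofNat, pderiv_mul,
      pderiv_pow, pderiv_X, pderiv_C, Pi.single_apply]
    norm_num [Fin.ext_iff]
    ring
  · simp only [L1, D, x2, x3, x4, map_add, map_sub, map_neg, pd_ofNat, pderiv_mul,
      pderiv_pow, pderiv_X, pderiv_C, Pi.single_apply]
    norm_num [Fin.ext_iff]
    ring
  · simp only [L2, D, x2, x3, x4, map_add, map_sub, map_neg, pd_ofNat, pderiv_mul,
      pderiv_pow, pderiv_X, pderiv_C, Pi.single_apply]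
    norm_num [Fin.ext_iff]
    linear_combination (-432 * X 2 * X 0 ^ 2 * X 1 ^ 2 + 36 * X 2 ^ 2 * X 1 ^ 2
        + 24 * X 2 ^ 3 * X 0 : R3) * h

end
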